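/- Let an ECO-system satisfy: (1) for every label k there is a production e_i(k) > k; (2) writing m(k) = |{i ≤ k : e_i(k) ≥ k - b}| for a fixed b ≥ 0, the sequence m(k) is nondecreasing and tends to infinity. Then the counting sequence f_n of nodes at level n grows superexponentially: f_{n(b+1)} ≥ m(s_0+b)m(s_0+2b)···m(s_0+nb), and consequently the ordinary generating function ∑ f_n z^n has radius of convergence 0. -/

import Mathlib

open Filter Multiset

/-- One branching step: nodes labeled `≥ K + b` each contribute at least `m (K + b)`
children labeled `≥ K`. -/
lemma stmt14_step (e : ℕ → List ℕ) (b : ℕ) (m : ℕ → ℕ)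
    (hm : ∀ k, m k = ((e k).filter (fun l => k ≤ l + b)).length)
    (hmono : Monotone m) (K : ℕ) (s : Multiset ℕ) :
    Multiset.card (s.filter (fun k => K + b ≤ k)) * m (K + b) ≤
      Multiset.card ((s.bind (fun k => (e k : Multiset ℕ))).filter (fun x => K ≤ x)) := by
  induction s using Multiset.induction with
  | empty => simp
  | cons a s ih =>
    rw [Multiset.cons_bind, Multiset.filter_add, Multiset.card_add]
    by_cases h : K + b ≤ a
    · rw [Multiset.filter_cons_of_pos _ h, Multiset.card_cons]
      have h1 : m (K + b) ≤ Multiset.card (((e a : Multiset ℕ)).filter (fun x => K ≤ x)) := by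
        have h3 : ((e a : Multiset ℕ).filter (fun l => a ≤ l + b)) ≤
            ((e a : Multiset ℕ).filter (fun x => K ≤ x)) :=
          Multiset.monotone_filter_right _ (fun l hl => by omega)
        have h4 : m a = Multiset.card ((e a : Multiset ℕ).filter (fun l => a ≤ l + b)) := by
          rw [hm a]; simp
        calc m (K + b) ≤ m a := hmono h
          _ ≤ _ := h4 ▸ Multiset.card_le_card h3
      calc (Multiset.card (s.filter (fun k => K + b ≤ k)) + 1) * m (K + b)
          = m (K + b) + Multiset.card (s.filter (fun k => K + b ≤ k)) * m (K + b) := by ring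
        _ ≤ _ := add_le_add h1 ih
    · rw [Multiset.filter_cons_of_neg _ h]
      exact le_trans ih (Nat.le_add_left _ _)

theorem stmt_14 (s0 : ℕ) (hs0 : 1 ≤ s0) (e : ℕ → List ℕ) (b : ℕ) (m : ℕ → ℕ)
    (hlen : ∀ k, 1 ≤ k → (e k).length = k)
    (hpos : ∀ k, 1 ≤ k → ∀ l ∈ e k, 1 ≤ l)
    (hfwd : ∀ k, 1 ≤ k → ∃ l ∈ e k, k < l)
    (hm : ∀ k, m k = ((e k).filter (fun l => k ≤ l + b)).length)
    (hmono : Monotone m)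
    (htend : Filter.Tendsto m Filter.atTop Filter.atTop)
    (levels : ℕ → Multiset ℕ)
    (hlev0 : levels 0 = {s0})
    (hlev : ∀ n, levels (n + 1) = (levels n).bind (fun k => (e k : Multiset ℕ)))
    (f : ℕ → ℕ) (hf : ∀ n, f n = Multiset.card (levels n)) :
    (∀ n, ∏ i ∈ Finset.Icc 1 n, m (s0 + i * b) ≤ f (n * (b + 1))) ∧
    (∀ x : ℝ, 0 < x → ¬ Summable (fun n => (f n : ℝ) * x ^ n)) := by
  -- all labels are positive
  have pos : ∀ n, ∀ k ∈ levels n, 1 ≤ k := by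
    intro n
    induction n with
    | zero => intro k hk; rw [hlev0] at hk; simp at hk; omega
    | succ n ih =>
      intro k hk
      rw [hlev n, Multiset.mem_bind] at hk
      obtain ⟨a, ha, hk⟩ := hk
      exact hpos a (ih a ha) k (by simpa using hk)
  -- a strictly increasing chain of labels
  have chain : ∀ n, ∃ k ∈ levels n, s0 + n ≤ k := by
    intro n
    induction n with
    | zero => exact ⟨s0, by rw [hlev0]; simp, by omega⟩
    | succ n ih =>
      obtain ⟨k, hk, hk2⟩ := ih
      obtain ⟨l, hl, hl2⟩ := hfwd k (pos n k hk)
      refine ⟨l, ?_, by omega⟩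
      rw [hlev n, Multiset.mem_bind]
      exact ⟨k, hk, by simpa using hl⟩
  -- main counting lemma
  have main : ∀ (L : ℕ), 1 ≤ L → ∀ n N C,
      C ≤ Multiset.card ((levels N).filter (fun x => L + n * b ≤ x)) →
      C * ∏ i ∈ Finset.Icc 1 n, m (L + i * b) ≤
        Multiset.card ((levels (N + n)).filter (fun x => L ≤ x)) := by
    intro L hL n
    induction n with
    | zero => intro N C h; simpa using h
    | succ n ih =>
      intro N C h
      have step := stmt14_step e b m hm hmono (L + n * b) (levels N)
      rw [← hlev N] at step
      have hKb : L + n * b + b = L + (n + 1) * b := by ring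
      rw [hKb] at step
      have h2 : C * m (L + (n + 1) * b) ≤
          Multiset.card ((levels (N + 1)).filter (fun x => L + n * b ≤ x)) := by
        refine le_trans (Nat.mul_le_mul_right _ ?_) step
        exact le_trans h (Multiset.card_le_card
          (Multiset.monotone_filter_right _ (fun k hk => by omega)))
      have h3 := ih (N + 1) (C * m (L + (n + 1) * b)) h2
      rw [Finset.prod_Icc_succ_top (by omega : 1 ≤ n + 1)]
      calc C * ((∏ i ∈ Finset.Icc 1 n, m (L + i * b)) * m (L + (n + 1) * b))
          = C * m (L + (n + 1) * b) * ∏ i ∈ Finset.Icc 1 n, m (L + i * b) := by ring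
        _ ≤ Multiset.card ((levels (N + 1 + n)).filter (fun x => L ≤ x)) := h3
        _ = Multiset.card ((levels (N + (n + 1))).filter (fun x => L ≤ x)) := by
            rw [show N + 1 + n = N + (n + 1) by omega]
  -- from the counting lemma to `f`
  have keyf : ∀ (L : ℕ), s0 ≤ L → ∀ n,
      ∏ i ∈ Finset.Icc 1 n, m (L + i * b) ≤ f ((L - s0) + n * (b + 1)) := by
    intro L hsL n
    obtain ⟨k, hk, hk2⟩ := chain ((L - s0) + n * b)
    have h1 : 1 ≤ Multiset.card ((levels ((L - s0) + n * b)).filter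
        (fun x => L + n * b ≤ x)) := by
      rw [Nat.one_le_iff_ne_zero, ← Nat.pos_iff_ne_zero, Multiset.card_pos]
      intro hemp
      have : k ∈ (levels ((L - s0) + n * b)).filter (fun x => L + n * b ≤ x) :=
        Multiset.mem_filter.2 ⟨hk, by omega⟩
      rw [hemp] at this
      simp at this
    have h2 := main L (by omega) n ((L - s0) + n * b) 1 h1
    rw [one_mul] at h2
    calc ∏ i ∈ Finset.Icc 1 n, m (L + i * b)
        ≤ Multiset.card ((levels ((L - s0) + n * b + n)).filter (fun x => L ≤ x)) := h2
      _ ≤ Multiset.card (levels ((L - s0) + n * b + n)) :=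
          Multiset.card_le_card (Multiset.filter_le _ _)
      _ = f ((L - s0) + n * (b + 1)) := by
          rw [hf, show (L - s0) + n * b + n = (L - s0) + n * (b + 1) by ring]
  constructor
  · intro n
    have := keyf s0 le_rfl n
    simpa using this
  · intro x hx hS
    set y := x ^ (b + 1) with hy
    have hy0 : 0 < y := pow_pos hx _
    set M := ⌈y⁻¹⌉₊ with hM
    have hMy : 1 ≤ (M : ℝ) * y := by
      have h := Nat.le_ceil y⁻¹
      calc (1 : ℝ) = y⁻¹ * y := by field_simp
        _ ≤ (M : ℝ) * y := mul_le_mul_of_nonneg_right h hy0.le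
    obtain ⟨K0, hK0⟩ := Filter.eventually_atTop.1 (htend.eventually_ge_atTop M)
    set L := max s0 K0 with hLdef
    have hsL : s0 ≤ L := le_max_left _ _
    set A := L - s0 with hA
    have key : ∀ n, M ^ n ≤ f (A + n * (b + 1)) := by
      intro n
      refine le_trans ?_ (keyf L hsL n)
      calc M ^ n = ∏ _i ∈ Finset.Icc 1 n, M := by
            rw [Finset.prod_const, Nat.card_Icc]; simp
        _ ≤ ∏ i ∈ Finset.Icc 1 n, m (L + i * b) := by
            refine Finset.prod_le_prod' (fun i _ => ?_)
            exact hK0 (L + i * b) (le_trans (le_max_right _ _) (Nat.le_add_right _ _))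
    have hmono' : Filter.Tendsto (fun n => A + n * (b + 1)) atTop atTop := by
      refine tendsto_atTop_mono (fun n => ?_) tendsto_id
      simp only [id_eq]
      have : n ≤ n * (b + 1) := Nat.le_mul_of_pos_right n (by omega)
      omega
    have hcomp : Filter.Tendsto (fun n => (f (A + n * (b + 1)) : ℝ) * x ^ (A + n * (b + 1)))
        atTop (nhds 0) := (hS.tendsto_atTop_zero).comp hmono'
    have hbound : ∀ n, x ^ A ≤ (f (A + n * (b + 1)) : ℝ) * x ^ (A + n * (b + 1)) := by
      intro n
      have hcast : ((M : ℝ)) ^ n ≤ (f (A + n * (b + 1)) : ℝ) := by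
        exact_mod_cast key n
      have h5 : x ^ (A + n * (b + 1)) = x ^ A * y ^ n := by
        rw [pow_add, mul_comm n (b + 1), pow_mul]
      have h6 : (1 : ℝ) ≤ (M : ℝ) ^ n * y ^ n := by
        rw [← mul_pow]; exact one_le_pow₀ hMy
      calc x ^ A = x ^ A * 1 := (mul_one _).symm
        _ ≤ x ^ A * ((M : ℝ) ^ n * y ^ n) :=
            mul_le_mul_of_nonneg_left h6 (pow_pos hx _).le
        _ ≤ x ^ A * ((f (A + n * (b + 1)) : ℝ) * y ^ n) :=
            mul_le_mul_of_nonneg_left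
              (mul_le_mul_of_nonneg_right hcast (pow_pos hy0 _).le) (pow_pos hx _).le
        _ = (f (A + n * (b + 1)) : ℝ) * x ^ (A + n * (b + 1)) := by rw [h5]; ring
    have hle : x ^ A ≤ 0 := ge_of_tendsto hcomp (Filter.Eventually.of_forall hbound)
    linarith [pow_pos hx A]
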